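/- Let N, B, T, k be natural numbers with N ≥ 2, B ≥ 1, 2^(T−1) ≤ N ≤ 2^T, and 2^(2^(k+1)) − 1 > B. Then 2·⌈(T : ℝ)/2^k⌉ ≤ 4·⌈log_{B+1} N + log_{B+1} 2⌉, where ⌈·⌉ denotes the real ceiling and log_b denotes the real logarithm to base b. -/

import Mathlib

theorem stmt_0 (N B T k : ℕ) (hN : 2 ≤ N) (hB : 1 ≤ B)
    (hT1 : 2 ^ (T - 1) ≤ N) (hT2 : N ≤ 2 ^ T)
    (hk : B < 2 ^ (2 ^ (k + 1)) - 1) :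
    2 * ⌈(T : ℝ) / 2 ^ k⌉ ≤
      4 * ⌈Real.logb ((B : ℝ) + 1) (N : ℝ) + Real.logb ((B : ℝ) + 1) 2⌉ := by
  have hT : 1 ≤ T := by
    rcases Nat.eq_zero_or_pos T with h | h
    · subst h; simp at hT2; omega
    · exact h
  have hB1 : (1:ℝ) < (B:ℝ) + 1 := by
    have : (1:ℝ) ≤ (B:ℝ) := by exact_mod_cast hB
    linarith
  have hlogBpos : 0 < Real.log ((B:ℝ)+1) := Real.log_pos hB1
  have hlog2pos : (0:ℝ) < Real.log 2 := Real.log_pos (by norm_num)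
  -- B + 1 ≤ 2^(2^(k+1))
  have hone : 1 ≤ 2 ^ (2^(k+1)) := Nat.one_le_two_pow
  have hBn : B + 1 ≤ 2 ^ (2^(k+1)) := by omega
  have hBr : (B:ℝ) + 1 ≤ (2:ℝ) ^ (2^(k+1) : ℕ) := by
    exact_mod_cast hBn
  have hlogB : Real.log ((B:ℝ)+1) ≤ (2:ℝ)^(k+1) * Real.log 2 := by
    calc Real.log ((B:ℝ)+1) ≤ Real.log ((2:ℝ) ^ (2^(k+1) : ℕ)) :=
          Real.log_le_log (by linarith) hBr
      _ = ((2^(k+1) : ℕ) : ℝ) * Real.log 2 := Real.log_pow _ _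
      _ = (2:ℝ)^(k+1) * Real.log 2 := by push_cast; ring
  -- 2^T ≤ 2*N
  have h2Nn : 2^T ≤ 2 * N := by
    have : 2^T = 2 * 2^(T-1) := by
      rw [← pow_succ']; congr 1; omega
    omega
  have h2N : (2:ℝ)^T ≤ 2 * (N:ℝ) := by exact_mod_cast h2Nn
  have hNpos : (0:ℝ) < (N:ℝ) := by
    have : (2:ℝ) ≤ (N:ℝ) := by exact_mod_cast hN
    linarith
  have hlog2N : (T:ℝ) * Real.log 2 ≤ Real.log ((N:ℝ) * 2) := by
    calc (T:ℝ) * Real.log 2 = Real.log ((2:ℝ)^T) := by rw [Real.log_pow]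
      _ ≤ Real.log ((N:ℝ) * 2) := Real.log_le_log (by positivity) (by linarith)
  have hx : (T:ℝ)/2^(k+1) ≤ Real.logb ((B:ℝ)+1) (N:ℝ) + Real.logb ((B:ℝ)+1) 2 := by
    rw [Real.logb, Real.logb, ← add_div,
      ← Real.log_mul (by positivity) (by norm_num)]
    rw [div_le_div_iff₀ (by positivity) hlogBpos]
    have hTnn : (0:ℝ) ≤ (T:ℝ) := by positivity
    have hpk : (0:ℝ) < (2:ℝ)^(k+1) := by positivity
    nlinarith [mul_le_mul_of_nonneg_left hlogB hTnn,
      mul_le_mul_of_nonneg_left hlog2N hpk.le]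
  have hceil : ⌈(T:ℝ)/2^k⌉ ≤ 2 * ⌈(T:ℝ)/2^(k+1)⌉ := by
    have hsplit : (T:ℝ)/2^k = (T:ℝ)/2^(k+1) + (T:ℝ)/2^(k+1) := by
      rw [pow_succ]
      have : ((2:ℝ)^k) ≠ 0 := by positivity
      field_simp
      ring
    rw [hsplit, two_mul]
    exact Int.ceil_add_le _ _
  have hmono : ⌈(T:ℝ)/2^(k+1)⌉ ≤
      ⌈Real.logb ((B:ℝ)+1) (N:ℝ) + Real.logb ((B:ℝ)+1) 2⌉ :=
    Int.ceil_le_ceil hx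
  linarith
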